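/- Let Q be the A₂ quiver 1 ← 2. Then in the completed quantum algebra Â_Q the pentagon identity holds: E(y_{e₁})·E(y_{e₂}) = E(y_{e₂})·E(y_{e₁+e₂})·E(y_{e₁}). -/

import Mathlib

open scoped BigOperators

/-- A quiver on vertex set `Fin n` with `m` arrows, each arrow `a` having a
tail `ta a` and a head `ha a`. -/
structure Quiv (n : ℕ) where
  m : ℕ
  ta : Fin m → Fin n
  ha : Fin m → Fin n

namespace Quiv

variable {n : ℕ}

/-- Coerce a dimension vector in `ℕⁿ` to `ℤⁿ`. -/
def toZ {n : ℕ} (γ : Fin n → ℕ) : Fin n → ℤ := fun i => (γ i : ℤ)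

/-- The Euler form of the subquiver with vertex set `V` and arrow set `A`. -/
def chiSub (Q : Quiv n) (V : Finset (Fin n)) (A : Finset (Fin Q.m))
    (γ₁ γ₂ : Fin n → ℤ) : ℤ :=
  (∑ i ∈ V, γ₁ i * γ₂ i) - ∑ a ∈ A, γ₁ (Q.ta a) * γ₂ (Q.ha a)

/-- The Euler form `χ` of `Q`. -/
def chi (Q : Quiv n) (γ₁ γ₂ : Fin n → ℤ) : ℤ :=
  Q.chiSub Finset.univ Finset.univ γ₁ γ₂

/-- `λ(γ₁,γ₂) = χ(γ₂,γ₁) − χ(γ₁,γ₂)`, the antisymmetrized Euler form. -/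
def lam (Q : Quiv n) (γ₁ γ₂ : Fin n → ℤ) : ℤ := Q.chi γ₂ γ₁ - Q.chi γ₁ γ₂

/-- `λ_A`, the restriction of `λ` to a subset `A` of the arrows. -/
def lamA (Q : Quiv n) (A : Finset (Fin Q.m)) (γ₁ γ₂ : Fin n → ℤ) : ℤ :=
  ∑ a ∈ A, (γ₁ (Q.ta a) * γ₂ (Q.ha a) - γ₂ (Q.ta a) * γ₁ (Q.ha a))

/-- No directed cycle using only arrows from `A`. -/
def AcyclicOn (Q : Quiv n) (A : Finset (Fin Q.m)) : Prop :=
  ¬ ∃ (k : ℕ) (c : ZMod (k + 1) → Fin Q.m),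
      (∀ i, c i ∈ A) ∧ ∀ i, Q.ha (c i) = Q.ta (c (i + 1))

/-- The quiver `Q` is acyclic: it has no directed cycle. -/
def Acyclic (Q : Quiv n) : Prop := Q.AcyclicOn Finset.univ

/-- Undirected adjacency via an arrow from `A`. -/
def AdjOn (Q : Quiv n) (A : Finset (Fin Q.m)) (x y : Fin n) : Prop :=
  ∃ a ∈ A, (Q.ta a = x ∧ Q.ha a = y) ∨ (Q.ta a = y ∧ Q.ha a = x)

/-- The subquiver `(V, A)` is connected as an undirected graph. -/
def ConnectedOn (Q : Quiv n) (V : Finset (Fin n)) (A : Finset (Fin Q.m)) : Prop :=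
  ∀ x ∈ V, ∀ y ∈ V, Relation.ReflTransGen (Q.AdjOn A) x y

/-- The Tits form of the subquiver `(V,A)` is positive definite. -/
def PosDefOn (Q : Quiv n) (V : Finset (Fin n)) (A : Finset (Fin Q.m)) : Prop :=
  ∀ γ : Fin n → ℤ, (∀ i, i ∉ V → γ i = 0) → γ ≠ 0 → 0 < Q.chiSub V A γ γ

/-- The subquiver `(V,A)` is a (nonempty, connected, acyclic, positive-definite
Tits form) Dynkin quiver. -/
def DynkinOn (Q : Quiv n) (V : Finset (Fin n)) (A : Finset (Fin Q.m)) : Prop :=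
  V.Nonempty ∧ (∀ a ∈ A, Q.ta a ∈ V ∧ Q.ha a ∈ V) ∧
    Q.ConnectedOn V A ∧ Q.AcyclicOn A ∧ Q.PosDefOn V A

/-- The set of positive roots of the subquiver `(V,A)`: nonzero dimension
vectors supported on `V` with `χ(β,β) = 1`. -/
def PosRootsOn (Q : Quiv n) (V : Finset (Fin n)) (A : Finset (Fin Q.m)) :
    Set (Fin n → ℕ) :=
  {β | β ≠ 0 ∧ (∀ i, i ∉ V → β i = 0) ∧ Q.chiSub V A (toZ β) (toZ β) = 1}

/-- A Dynkin subquiver partition `Q• = {Q¹,…,Q^ℓ}` of `Q`: each block is a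
subquiver `(V j, A j)`, the vertex sets partition `Q₀`, and each block is a
nonempty connected Dynkin quiver. -/
structure DSP (Q : Quiv n) (ℓ : ℕ) where
  V : Fin ℓ → Finset (Fin n)
  A : Fin ℓ → Finset (Fin Q.m)
  cover : ∀ i : Fin n, ∃! j, i ∈ V j
  dynkin : ∀ j, Q.DynkinOn (V j) (A j)

/-- Arrows of `Q` not belonging to any block, i.e. arrows of the contracted
quiver `P(Q,Q•)`. -/
def DSP.Cut {Q : Quiv n} {ℓ : ℕ} (P : DSP Q ℓ) (a : Fin Q.m) : Prop :=
  ∀ j, a ∉ P.A j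

/-- `Q•` is admissible: the contracted quiver `P(Q,Q•)` is acyclic, i.e. there
is no cyclic sequence of cut arrows in which the block of the head of each
arrow is the block of the tail of the next one. -/
def DSP.Admissible {Q : Quiv n} {ℓ : ℕ} (P : DSP Q ℓ) : Prop :=
  ¬ ∃ (k : ℕ) (c : ZMod (k + 1) → Fin Q.m),
      (∀ i, P.Cut (c i)) ∧
      ∀ i, ∃ j : Fin ℓ, Q.ha (c i) ∈ P.V j ∧ Q.ta (c (i + 1)) ∈ P.V j

/-- `Q•` is ordered: every cut arrow goes from a higher-indexed block (tail)
to a lower-indexed block (head). -/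
def DSP.Ordered {Q : Quiv n} {ℓ : ℕ} (P : DSP Q ℓ) : Prop :=
  ∀ a : Fin Q.m, P.Cut a →
    ∀ j j' : Fin ℓ, Q.ha a ∈ P.V j → Q.ta a ∈ P.V j' → j < j'

/-- `Φ(Q,Q•) = ∪_j Φ^j`. -/
def DSP.Roots {Q : Quiv n} {ℓ : ℕ} (P : DSP Q ℓ) : Set (Fin n → ℕ) :=
  ⋃ j, Q.PosRootsOn (P.V j) (P.A j)

/-- An allowed total order `φ₁ ≺ ⋯ ≺ φ_r` on `Φ(Q,Q•)`: an enumeration such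
that for `u < v`, `λ(φ_u,φ_v) ≥ 0` if `φ_u, φ_v` lie in the same `Φ^j` and
`λ(φ_u,φ_v) ≤ 0` if they lie in different `Φ^j`'s. -/
def DSP.AllowedOrder {Q : Quiv n} {ℓ : ℕ} (P : DSP Q ℓ) {r : ℕ}
    (φ : Fin r → (Fin n → ℕ)) : Prop :=
  Function.Injective φ ∧ Set.range φ = P.Roots ∧
    ∀ u v : Fin r, u < v →
      ((∃ j, φ u ∈ Q.PosRootsOn (P.V j) (P.A j) ∧
          φ v ∈ Q.PosRootsOn (P.V j) (P.A j)) →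
        0 ≤ Q.lam (toZ (φ u)) (toZ (φ v))) ∧
      ((¬ ∃ j, φ u ∈ Q.PosRootsOn (P.V j) (P.A j) ∧
          φ v ∈ Q.PosRootsOn (P.V j) (P.A j)) →
        Q.lam (toZ (φ u)) (toZ (φ v)) ≤ 0)

end Quiv

noncomputable section

open Quiv

/-- The underlying vector space of the completed quantum algebra `Â_Q`:
functions from dimension vectors to `ℚ(t)`. -/
abbrev AQ (n : ℕ) := (Fin n → ℕ) → RatFunc ℚ

/-- The variable `t = q^{1/2}` of `ℚ(t)`. -/
def tq : RatFunc ℚ := RatFunc.X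

/-- The unit of `Â_Q`: the indicator function of the zero dimension vector. -/
def oneQ {n : ℕ} : AQ n := fun γ => if γ = 0 then 1 else 0

/-- The generator `y_γ = −δ_γ` of the quantum algebra. -/
def yQ {n : ℕ} (γ : Fin n → ℕ) : AQ n := fun δ => if δ = γ then -1 else 0

/-- The twisted convolution product of the quantum algebra:
`(f·g)(γ) = Σ_{γ₁+γ₂=γ} t^{λ(γ₁,γ₂)} f(γ₁) g(γ₂)`. -/
def mulQ {n : ℕ} (Q : Quiv n) (f g : AQ n) : AQ n := fun γ =>
  ∑ γ₁ ∈ Finset.Iic γ,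
    tq ^ (Q.lam (toZ γ₁) (toZ (γ - γ₁))) * f γ₁ * g (γ - γ₁)

/-- Ordered product of a list of elements of `Â_Q`. -/
def prodQ {n : ℕ} (Q : Quiv n) (L : List (AQ n)) : AQ n := L.foldr (mulQ Q) oneQ

/-- Power in the quantum algebra. -/
def powQ {n : ℕ} (Q : Quiv n) (f : AQ n) : ℕ → AQ n
  | 0 => oneQ
  | k + 1 => mulQ Q f (powQ Q f k)

/-- `P_k = Π_{j=1}^k (1 − q^j)⁻¹` with `q = t²`, the Poincaré series of
`H^*(BGL(k,ℂ))`. -/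
def Pq (k : ℕ) : RatFunc ℚ := ∏ j ∈ Finset.Icc 1 k, (1 - tq ^ (2 * j))⁻¹

/-- The quantum dilogarithm `E(y_γ) = 1 + Σ_{k≥1} (−1)^k t^{k²} P_k y_γ^k`,
written out as the function supported on the multiples `k • γ`,
with value `t^{k²} P_k` at `k • γ`  (note `y_γ^k = (−1)^k δ_{kγ}`). -/
def Edl {n : ℕ} (γ : Fin n → ℕ) : AQ n := fun δ =>
  ∑ k ∈ Finset.range ((∑ i, δ i) + 1),
    if δ = k • γ then tq ^ (k ^ 2) * Pq k else 0

end

/-- The `A₂` quiver `1 ← 2` (vertices `0,1` of `Fin 2`): one arrow `2 → 1`. -/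
def QA2 : Quiv 2 := ⟨1, ![1], ![0]⟩

-- helpers
open Quiv Finset

lemma vec_eta (δ : Fin 2 → ℕ) : ![δ 0, δ 1] = δ := by
  funext i; fin_cases i <;> simp

lemma smul_vec (k x y : ℕ) : k • (![x, y] : Fin 2 → ℕ) = ![k*x, k*y] := by
  funext i; fin_cases i <;> simp [Pi.smul_apply]

lemma sub_vec (γ : Fin 2 → ℕ) (x y : ℕ) : γ - ![x, y] = ![γ 0 - x, γ 1 - y] := by
  funext i; fin_cases i <;> simp [Pi.sub_apply]

lemma lam_eval (γ₁ γ₂ : Fin 2 → ℕ) :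
    QA2.lam (toZ γ₁) (toZ γ₂) = (γ₁ 1 : ℤ) * (γ₂ 0 : ℤ) - (γ₁ 0 : ℤ) * (γ₂ 1 : ℤ) := by
  simp only [Quiv.lam, Quiv.chi, Quiv.chiSub, QA2, Fin.sum_univ_two, Fin.sum_univ_one,
    Quiv.toZ, Matrix.cons_val_zero, Matrix.cons_val_one, Matrix.head_cons]
  erw [Fin.sum_univ_one, Fin.sum_univ_one]
  simp
  ring

lemma sum_Iic_fin2 (γ : Fin 2 → ℕ) (F : (Fin 2 → ℕ) → RatFunc ℚ) :
    ∑ δ ∈ Finset.Iic γ, F δ =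
      ∑ p ∈ Finset.range (γ 0 + 1) ×ˢ Finset.range (γ 1 + 1), F ![p.1, p.2] := by
  apply Finset.sum_nbij' (i := fun δ => (δ 0, δ 1)) (j := fun p => ![p.1, p.2])
  · intro δ hδ
    rw [Finset.mem_Iic] at hδ
    simp only [Finset.mem_product, Finset.mem_range]
    exact ⟨Nat.lt_succ_of_le (hδ 0), Nat.lt_succ_of_le (hδ 1)⟩
  · intro p hp
    simp only [Finset.mem_product, Finset.mem_range] at hp
    rw [Finset.mem_Iic]
    intro i; fin_cases i <;> simp <;> omega
  · intro δ _; exact vec_eta δ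
  · intro p _; simp
  · intro δ _; rw [vec_eta]

lemma Edl_e1 (δ : Fin 2 → ℕ) :
    Edl ![1, 0] δ = if δ 1 = 0 then tq ^ ((δ 0)^2) * Pq (δ 0) else 0 := by
  rw [Edl]
  by_cases h : δ 1 = 0
  · rw [if_pos h, Finset.sum_eq_single_of_mem (δ 0)
      (Finset.mem_range.2 (by rw [Fin.sum_univ_two]; omega))]
    · rw [if_pos]
      rw [smul_vec]
      funext i; fin_cases i <;> simp [h]
    · intro k _ hk
      rw [if_neg]
      intro he
      rw [smul_vec] at he
      apply hk
      have := congrFun he 0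
      simpa using this.symm
  · rw [if_neg h]
    apply Finset.sum_eq_zero
    intro k _
    rw [if_neg]
    intro he
    rw [smul_vec] at he
    have := congrFun he 1
    simp at this
    exact h this

lemma Edl_e2 (δ : Fin 2 → ℕ) :
    Edl ![0, 1] δ = if δ 0 = 0 then tq ^ ((δ 1)^2) * Pq (δ 1) else 0 := by
  rw [Edl]
  by_cases h : δ 0 = 0
  · rw [if_pos h, Finset.sum_eq_single_of_mem (δ 1)
      (Finset.mem_range.2 (by rw [Fin.sum_univ_two]; omega))]
    · rw [if_pos]
      rw [smul_vec]
      funext i; fin_cases i <;> simp [h]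
    · intro k _ hk
      rw [if_neg]
      intro he
      rw [smul_vec] at he
      apply hk
      have := congrFun he 1
      simpa using this.symm
  · rw [if_neg h]
    apply Finset.sum_eq_zero
    intro k _
    rw [if_neg]
    intro he
    rw [smul_vec] at he
    have := congrFun he 0
    simp at this
    exact h this

lemma Edl_e12 (δ : Fin 2 → ℕ) :
    Edl ![1, 1] δ = if δ 0 = δ 1 then tq ^ ((δ 0)^2) * Pq (δ 0) else 0 := by
  rw [Edl]
  by_cases h : δ 0 = δ 1
  · rw [if_pos h, Finset.sum_eq_single_of_mem (δ 0)
      (Finset.mem_range.2 (by rw [Fin.sum_univ_two]; omega))]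
    · rw [if_pos]
      rw [smul_vec]
      funext i; fin_cases i <;> simp [h]
    · intro k _ hk
      rw [if_neg]
      intro he
      rw [smul_vec] at he
      apply hk
      have := congrFun he 0
      simpa using this.symm
  · rw [if_neg h]
    apply Finset.sum_eq_zero
    intro k _
    rw [if_neg]
    intro he
    rw [smul_vec] at he
    have h0 := congrFun he 0
    have h1 := congrFun he 1
    simp at h0 h1
    exact h (h0.trans h1.symm)

lemma mulQ_oneQ {n : ℕ} (Q : Quiv n) (f : AQ n) : mulQ Q f oneQ = f := by
  funext γ
  rw [mulQ, Finset.sum_eq_single_of_mem γ (Finset.mem_Iic.2 le_rfl)]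
  · have h0 : γ - γ = 0 := by simp
    have hz : toZ (0 : Fin n → ℕ) = 0 := by funext i; simp [Quiv.toZ]
    rw [h0, oneQ, if_pos rfl, hz]
    have : Q.lam (toZ γ) 0 = 0 := by
      simp [Quiv.lam, Quiv.chi, Quiv.chiSub]
    rw [this, zpow_zero, one_mul, mul_one]
  · intro γ₁ hγ₁ hne
    have : γ - γ₁ ≠ 0 := by
      intro h
      exact hne (le_antisymm (Finset.mem_Iic.1 hγ₁) (tsub_eq_zero_iff_le.1 h))
    rw [oneQ, if_neg this, mul_zero]

-- scalar lemmas
lemma tq_pow_ne_one {j : ℕ} (hj : j ≠ 0) : (tq : RatFunc ℚ) ^ j ≠ 1 := by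
  intro h
  have h3 : (Polynomial.X : Polynomial ℚ) ^ j = 1 := by
    have h2 : (algebraMap (Polynomial ℚ) (RatFunc ℚ)) (Polynomial.X ^ j) =
        (algebraMap (Polynomial ℚ) (RatFunc ℚ)) 1 := by
      simpa [map_pow, RatFunc.algebraMap_X, tq] using h
    exact IsFractionRing.injective (Polynomial ℚ) (RatFunc ℚ) h2
  have := congrArg Polynomial.natDegree h3
  simp [Polynomial.natDegree_X_pow] at this
  exact hj this

lemma one_sub_tq_pow_ne {j : ℕ} (hj : j ≠ 0) : (1 : RatFunc ℚ) - tq ^ j ≠ 0 := by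
  intro h
  exact tq_pow_ne_one hj (by linear_combination -h)

lemma tq_ne_zero : (tq : RatFunc ℚ) ≠ 0 := RatFunc.X_ne_zero

lemma Pq_zero : Pq 0 = 1 := by simp [Pq]

lemma Pq_succ (k : ℕ) : Pq (k + 1) = Pq k * (1 - tq ^ (2 * (k+1)))⁻¹ := by
  rw [Pq, Pq, Finset.prod_Icc_succ_top (by omega)]

lemma Pq_mul (k : ℕ) : (1 - tq ^ (2 * (k+1))) * Pq (k + 1) = Pq k := by
  rw [Pq_succ, mul_comm (Pq k), ← mul_assoc,
    mul_inv_cancel₀ (one_sub_tq_pow_ne (by omega)), one_mul]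

lemma pascal (i j : ℕ) :
    Pq (i+1) * Pq (j+1) * (1 - tq ^ (2*(i+j+2))) =
      tq ^ (2*(i+1)) * Pq (i+1) * Pq j + Pq i * Pq (j+1) := by
  have h1 : (1 : RatFunc ℚ) - tq ^ (2*(i+1)) ≠ 0 := one_sub_tq_pow_ne (by omega)
  have h2 : (1 : RatFunc ℚ) - tq ^ (2*(j+1)) ≠ 0 := one_sub_tq_pow_ne (by omega)
  rw [Pq_succ i, Pq_succ j]
  field_simp
  ring
noncomputable def Sterm (a b m : ℕ) : RatFunc ℚ :=
  if m ≤ a then tq ^ (2*((a-m)*(b-m))) * (Pq (a-m) * Pq m * Pq (b-m)) else 0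

noncomputable def Sf (a b : ℕ) : RatFunc ℚ := ∑ m ∈ Finset.range (b+1), Sterm a b m

lemma termsplit (a b m : ℕ) (ha : 1 ≤ a) (hm : m ≤ b + 1) :
    Sterm a (b+1) m * (1 - tq ^ (2*(b+1))) =
      tq ^ (2*a) * (if m ≤ b then Sterm a b m else 0) +
      (if 1 ≤ m then Sterm (a-1) b (m-1) else 0) := by
  by_cases hma : m ≤ a
  · rcases Nat.eq_zero_or_pos m with rfl | hm1
    · -- m = 0
      simp only [Sterm, if_pos (Nat.zero_le a), if_pos (Nat.zero_le b), if_pos,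
        Nat.sub_zero, if_neg (by omega : ¬ (1:ℕ) ≤ 0), add_zero]
      calc tq ^ (2*(a*(b+1))) * (Pq a * Pq 0 * Pq (b+1)) * (1 - tq ^ (2*(b+1)))
          = tq ^ (2*(a*(b+1))) * (Pq a * Pq 0) * ((1 - tq ^ (2*(b+1))) * Pq (b+1)) := by ring
        _ = tq ^ (2*a + 2*(a*b)) * (Pq a * Pq 0) * Pq b := by
              rw [Pq_mul b, show 2*(a*(b+1)) = 2*a + 2*(a*b) by ring]
        _ = _ := by rw [pow_add]; ring
    · by_cases hmb : m ≤ b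
      · -- 1 ≤ m ≤ b, m ≤ a : pascal case
        obtain ⟨i, rfl⟩ : ∃ i, m = i + 1 := ⟨m - 1, by omega⟩
        obtain ⟨p, rfl⟩ : ∃ p, a = (i+1) + p := ⟨a - (i+1), by omega⟩
        obtain ⟨j, rfl⟩ : ∃ j, b = (i+1) + j := ⟨b - (i+1), by omega⟩
        simp only [Sterm, if_pos (by omega : i+1 ≤ i+1+p), if_pos hmb,
          if_pos (by omega : 1 ≤ i+1), if_pos (by omega : i+1-1 ≤ i+1+p-1)]
        have e1 : i + 1 + p - (i+1) = p := by omega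
        have e2 : i + 1 + j + 1 - (i+1) = j + 1 := by omega
        have e3 : i + 1 + j - (i+1) = j := by omega
        have e4 : i + 1 + p - 1 - (i+1-1) = p := by omega
        have e5 : i + 1 + j - (i+1-1) = j + 1 := by omega
        have e6 : i + 1 + j + 1 = i + j + 2 := by omega
        have e7 : i + 1 - 1 = i := by omega
        rw [e1, e2, e3, e4, e5, e6, e7]
        calc tq ^ (2*(p*(j+1))) * (Pq p * Pq (i+1) * Pq (j+1)) * (1 - tq ^ (2*(i+j+2)))
            = tq ^ (2*(p*(j+1))) * Pq p * (Pq (i+1) * Pq (j+1) * (1 - tq ^ (2*(i+j+2)))) := by ring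
          _ = tq ^ (2*(p*(j+1))) * Pq p * (tq ^ (2*(i+1)) * Pq (i+1) * Pq j + Pq i * Pq (j+1)) := by
                rw [pascal i j]
          _ = _ := by
                rw [mul_add]
                congr 1
                · rw [show 2*(p*(j+1)) = 2*(p*j) + 2*p by ring,
                    show 2*(i+1+p) = 2*(i+1) + 2*p by ring, pow_add, pow_add]
                  ring
                · ring
      · -- m = b + 1 ≤ a
        have hmb1 : m = b + 1 := by omega
        subst hmb1
        obtain ⟨p, rfl⟩ : ∃ p, a = (b+1) + p := ⟨a - (b+1), by omega⟩
        simp only [Sterm, if_pos (by omega : b+1 ≤ b+1+p), if_neg (by omega : ¬ b+1 ≤ b),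
          if_pos (by omega : 1 ≤ b+1), if_pos (by omega : b+1-1 ≤ b+1+p-1)]
        have e1 : b + 1 + p - (b+1) = p := by omega
        have e2 : b + 1 - (b+1) = 0 := by omega
        have e3 : b + 1 - 1 = b := by omega
        have e4 : b + 1 + p - 1 - b = p := by omega
        have e5 : b - b = 0 := by omega
        rw [e1, e2, e3, e4, e5]
        simp only [Nat.mul_zero, mul_zero, zero_add, pow_zero, one_mul]
        rw [← Pq_mul b]
        ring
  · -- m > a
    have h1 : ¬ (m - 1 ≤ a - 1) := by omega
    simp only [Sterm, if_neg hma, if_neg h1]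
    simp

lemma key (b a : ℕ) : Sf a b = Pq a * Pq b := by
  induction b generalizing a with
  | zero =>
      simp [Sf, Sterm, Pq_zero]
  | succ b ih =>
      rcases Nat.eq_zero_or_pos a with rfl | ha
      · rw [Sf, Finset.sum_eq_single_of_mem 0 (Finset.mem_range.2 (by omega))]
        · simp [Sterm, Pq_zero]
        · intro m _ hm
          rw [Sterm, if_neg (by omega)]
      · obtain ⟨a', rfl⟩ : ∃ a', a = a' + 1 := ⟨a - 1, by omega⟩
        have hne : (1 : RatFunc ℚ) - tq ^ (2*(b+1)) ≠ 0 := one_sub_tq_pow_ne (by omega)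
        have hsum : Sf (a'+1) (b+1) * (1 - tq ^ (2*(b+1))) =
            tq ^ (2*(a'+1)) * Sf (a'+1) b + Sf a' b := by
          rw [Sf, Finset.sum_mul]
          rw [Finset.sum_congr rfl (fun m hm => termsplit (a'+1) b m (by omega)
            (by simpa using Nat.lt_succ_iff.mp (Finset.mem_range.1 hm)))]
          rw [Finset.sum_add_distrib, ← Finset.mul_sum]
          congr 1
          · congr 1
            rw [Finset.sum_range_succ, if_neg (by omega : ¬ b+1 ≤ b), add_zero]
            exact Finset.sum_congr rfl fun m hm => if_pos (Nat.lt_succ_iff.mp (Finset.mem_range.1 hm))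
          · rw [Finset.sum_range_succ']
            simp only [if_neg (by omega : ¬ (1:ℕ) ≤ 0), add_zero]
            refine Finset.sum_congr rfl fun m _ => ?_
            rw [if_pos (by omega : 1 ≤ m + 1)]
            norm_num
        rw [ih, ih] at hsum
        have h2 : Sf (a'+1) (b+1) * (1 - tq ^ (2*(b+1))) = Pq (a'+1) * Pq b := by
          rw [hsum, ← Pq_mul a']
          ring
        calc Sf (a'+1) (b+1) = Sf (a'+1) (b+1) * ((1 - tq ^ (2*(b+1))) * (1 - tq ^ (2*(b+1)))⁻¹) := by
              rw [mul_inv_cancel₀ hne, mul_one]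
          _ = (Pq (a'+1) * Pq b) * (1 - tq ^ (2*(b+1)))⁻¹ := by rw [← mul_assoc, h2]
          _ = Pq (a'+1) * Pq (b+1) := by rw [Pq_succ b]; ring

lemma inner_eval (δ : Fin 2 → ℕ) :
    mulQ QA2 (Edl ![1,1]) (Edl ![1,0]) δ =
      if δ 1 ≤ δ 0 then
        tq ^ (δ 1 * (δ 0 - δ 1) + (δ 1)^2 + (δ 0 - δ 1)^2) * (Pq (δ 1) * Pq (δ 0 - δ 1))
      else 0 := by
  rw [mulQ, sum_Iic_fin2]
  by_cases h : δ 1 ≤ δ 0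
  · rw [if_pos h, Finset.sum_eq_single_of_mem (δ 1, δ 1)
      (Finset.mem_product.2 ⟨Finset.mem_range.2 (by omega), Finset.mem_range.2 (by omega)⟩)]
    · rw [sub_vec, lam_eval, Edl_e12, Edl_e1]
      simp only [Matrix.cons_val_zero, Matrix.cons_val_one, Matrix.head_cons]
      rw [Nat.sub_self]
      simp only [if_true]
      have hl : (((δ 1 : ℕ) : ℤ) * ((δ 0 - δ 1 : ℕ) : ℤ) - ((δ 1 : ℕ) : ℤ) * ((0:ℕ) : ℤ))
          = ((δ 1 * (δ 0 - δ 1) : ℕ) : ℤ) := by push_cast; ring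
      rw [hl, zpow_natCast, pow_add, pow_add]
      ring
    · rintro ⟨x, y⟩ hp hne
      simp only [Finset.mem_product, Finset.mem_range] at hp
      rw [sub_vec, Edl_e12, Edl_e1]
      simp only [Matrix.cons_val_zero, Matrix.cons_val_one, Matrix.head_cons]
      by_cases hxy : x = y
      · subst hxy
        have hyd : x ≠ δ 1 := fun hx => hne (by rw [hx])
        simp only [show ¬ (δ 1 - x = 0) by omega, ↓reduceIte, mul_zero]
      · simp only [hxy, ↓reduceIte, mul_zero, zero_mul]
  · rw [if_neg h]
    apply Finset.sum_eq_zero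
    rintro ⟨x, y⟩ hp
    simp only [Finset.mem_product, Finset.mem_range] at hp
    rw [sub_vec, Edl_e12, Edl_e1]
    simp only [Matrix.cons_val_zero, Matrix.cons_val_one, Matrix.head_cons]
    by_cases hxy : x = y
    · subst hxy
      simp only [show ¬ (δ 1 - x = 0) by omega, ↓reduceIte, mul_zero]
    · simp only [hxy, ↓reduceIte, mul_zero, zero_mul]

lemma lhs_eval (γ : Fin 2 → ℕ) :
    mulQ QA2 (Edl ![1,0]) (Edl ![0,1]) γ =
      (tq ^ (γ 0 * γ 1))⁻¹ * (tq ^ ((γ 0)^2) * Pq (γ 0) * (tq ^ ((γ 1)^2) * Pq (γ 1))) := by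
  rw [mulQ, sum_Iic_fin2]
  rw [Finset.sum_eq_single_of_mem (γ 0, 0)
    (Finset.mem_product.2 ⟨Finset.mem_range.2 (by omega), Finset.mem_range.2 (by omega)⟩)]
  · rw [sub_vec, lam_eval, Edl_e1, Edl_e2]
    simp only [Matrix.cons_val_zero, Matrix.cons_val_one, Matrix.head_cons]
    rw [Nat.sub_self, Nat.sub_zero]
    simp only [if_true]
    have hl : (((0:ℕ) : ℤ) * ((0:ℕ) : ℤ) - ((γ 0 : ℕ) : ℤ) * ((γ 1 : ℕ) : ℤ))
        = -((γ 0 * γ 1 : ℕ) : ℤ) := by push_cast; ring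
    rw [hl, zpow_neg, zpow_natCast]
    ring
  · rintro ⟨x, y⟩ hp hne
    simp only [Finset.mem_product, Finset.mem_range] at hp
    rw [sub_vec, Edl_e1, Edl_e2]
    simp only [Matrix.cons_val_zero, Matrix.cons_val_one, Matrix.head_cons]
    by_cases hy : y = 0
    · subst hy
      have hx : x ≠ γ 0 := fun hx => hne (by rw [hx])
      simp only [show ¬ (γ 0 - x = 0) by omega, ↓reduceIte, mul_zero]
    · simp only [hy, ↓reduceIte, mul_zero, zero_mul]

noncomputable def Gy (a b y : ℕ) : RatFunc ℚ :=
  if b - y ≤ a then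
    tq ^ (y*a + y^2 + ((b-y)*(a-(b-y)) + (b-y)^2 + (a-(b-y))^2)) *
      (Pq y * (Pq (b-y) * Pq (a-(b-y))))
  else 0

lemma rhs_eval (γ : Fin 2 → ℕ) :
    mulQ QA2 (Edl ![0,1]) (mulQ QA2 (Edl ![1,1]) (Edl ![1,0])) γ =
      ∑ y ∈ Finset.range (γ 1 + 1), Gy (γ 0) (γ 1) y := by
  rw [mulQ, sum_Iic_fin2, Finset.sum_product]
  rw [Finset.sum_eq_single_of_mem 0 (Finset.mem_range.2 (by omega))]
  · apply Finset.sum_congr rfl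
    intro y hy
    rw [sub_vec, lam_eval, Edl_e2, inner_eval]
    simp only [Matrix.cons_val_zero, Matrix.cons_val_one, Matrix.head_cons, Nat.sub_zero]
    simp only [if_true]
    have hl : (((y:ℕ) : ℤ) * ((γ 0 : ℕ) : ℤ) - ((0:ℕ) : ℤ) * ((γ 1 - y : ℕ) : ℤ))
        = ((y * γ 0 : ℕ) : ℤ) := by push_cast; ring
    rw [hl, zpow_natCast, Gy]
    by_cases hc : γ 1 - y ≤ γ 0
    · simp only [hc, ↓reduceIte]
      rw [pow_add, pow_add]
      ring
    · simp only [hc, ↓reduceIte, mul_zero]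
  · intro x hx hxne
    apply Finset.sum_eq_zero
    intro y hy
    rw [Edl_e2]
    simp only [Matrix.cons_val_zero, Matrix.cons_val_one, Matrix.head_cons]
    simp [hxne]

lemma Gy_eq (a b y : ℕ) (hy : y ≤ b) :
    Gy a b y = tq ^ (a^2 + b^2) * (tq ^ (a*b))⁻¹ * Sterm a b (b - y) := by
  obtain ⟨j, rfl⟩ : ∃ j, b = y + j := ⟨b - y, by omega⟩
  have hbm : y + j - y = j := by omega
  rw [Gy, Sterm, hbm]
  by_cases hja : j ≤ a
  · obtain ⟨i, rfl⟩ : ∃ i, a = j + i := ⟨a - j, by omega⟩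
    have e1 : j + i - j = i := by omega
    have e2 : y + j - j = y := by omega
    rw [e1, e2, if_pos hja, if_pos hja]
    have hB : (tq : RatFunc ℚ) ^ ((j+i)*(y+j)) ≠ 0 := pow_ne_zero _ tq_ne_zero
    field_simp
    ring
  · rw [if_neg hja, if_neg hja]
    simp


/-- pentagon identity: In `Â_Q` for the `A₂` quiver `1 ← 2`,
`E(y_{e₁})E(y_{e₂}) = E(y_{e₂})E(y_{e₁+e₂})E(y_{e₁})`. -/
theorem statement11 :
    prodQ QA2 [Edl ![1, 0], Edl ![0, 1]] =
      prodQ QA2 [Edl ![0, 1], Edl ![1, 1], Edl ![1, 0]] := by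
  have hL : prodQ QA2 [Edl ![1, 0], Edl ![0, 1]] =
      mulQ QA2 (Edl ![1,0]) (Edl ![0,1]) := by
    simp only [prodQ, List.foldr]
    rw [mulQ_oneQ]
  have hR : prodQ QA2 [Edl ![0, 1], Edl ![1, 1], Edl ![1, 0]] =
      mulQ QA2 (Edl ![0,1]) (mulQ QA2 (Edl ![1,1]) (Edl ![1,0])) := by
    simp only [prodQ, List.foldr]
    rw [mulQ_oneQ]
  rw [hL, hR]
  funext γ
  rw [lhs_eval, rhs_eval]
  rw [Finset.sum_congr rfl (fun y hy => Gy_eq (γ 0) (γ 1) y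
    (Nat.lt_succ_iff.mp (Finset.mem_range.1 hy)))]
  rw [Finset.sum_congr rfl (fun y hy => by
    rw [show γ 1 - y = γ 1 + 1 - 1 - y from by omega] :
    ∀ y ∈ Finset.range (γ 1 + 1), tq ^ ((γ 0)^2 + (γ 1)^2) * (tq ^ (γ 0 * γ 1))⁻¹ *
      Sterm (γ 0) (γ 1) (γ 1 - y) = tq ^ ((γ 0)^2 + (γ 1)^2) * (tq ^ (γ 0 * γ 1))⁻¹ *
      Sterm (γ 0) (γ 1) (γ 1 + 1 - 1 - y))]
  rw [Finset.sum_range_reflect (fun m => tq ^ ((γ 0)^2 + (γ 1)^2) * (tq ^ (γ 0 * γ 1))⁻¹ *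
      Sterm (γ 0) (γ 1) m) (γ 1 + 1)]
  rw [← Finset.mul_sum, ← Sf, key]
  rw [pow_add]
  ring
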